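/- arXiv:1203.4008 — 2 statements merged into one kernel-verified Lean document; each statement's English description precedes it below -/
import Mathlib

section
/- For every erasure probability ε with 0 < ε < 1, every integer N ≥ 1, and every integer T ≥ 1, the expected immediate reward K ↦ R_T(K) is unimodal on {1, …, T}: there exists m ∈ {1, …, T} such that R_T(K) ≤ R_T(K') whenever 1 ≤ K < K' ≤ m, and R_T(K) ≥ R_T(K') whenever m ≤ K < K' ≤ T. -/
/-- Single-receiver decoding probability: probability that one receiver obtains
`K` successful receptions within `T` slots over a binary erasure channel with
erasure probability `ε`.  (The sum over `Finset.Icc K T` is empty, i.e. `0`,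
when `T < K`.) -/
noncomputable def Phat (ε : ℝ) (K T : ℕ) : ℝ :=
  ∑ τ ∈ Finset.Icc K T, ((τ - 1).choose (K - 1) : ℝ) * ε ^ (τ - K) * (1 - ε) ^ K

/-- Probability that all `N` receivers (over i.i.d. erasure channels) decode a
network-coded block of `K` packets within `T` slots. -/
noncomputable def Pall (ε : ℝ) (N K T : ℕ) : ℝ := (Phat ε K T) ^ N

/-- Expected immediate reward: expected number of packets decoded by all `N`
receivers when a block of size `K` is transmitted with `T` slots remaining. -/
noncomputable def Rew (ε : ℝ) (N T K : ℕ) : ℝ := (K : ℝ) * Pall ε N K T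

lemma phat_diff (ε : ℝ) (K : ℕ) (hK : 1 ≤ K) :
    ∀ T, Phat ε K T - Phat ε (K + 1) T
      = (T.choose K : ℝ) * (1 - ε) ^ K * ε ^ (T - K) := by
  intro T
  induction T with
  | zero =>
      have h1 : Finset.Icc K 0 = ∅ := by
        apply Finset.Icc_eq_empty; omega
      have h2 : Finset.Icc (K + 1) 0 = ∅ := by
        apply Finset.Icc_eq_empty; omega
      have h3 : Nat.choose 0 K = 0 := Nat.choose_eq_zero_of_lt (by omega)
      simp [Phat, h1, h2, h3]
  | succ T ih =>
      rcases lt_or_ge (T + 1) K with h | h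
      · -- T+1 < K : everything zero
        have h1 : Finset.Icc K (T + 1) = ∅ := by apply Finset.Icc_eq_empty; omega
        have h2 : Finset.Icc (K + 1) (T + 1) = ∅ := by apply Finset.Icc_eq_empty; omega
        have h3 : Nat.choose (T + 1) K = 0 := Nat.choose_eq_zero_of_lt h
        simp [Phat, h1, h2, h3]
      · rcases eq_or_lt_of_le h with h' | h'
        · -- K = T + 1
          rw [← h']
          have h1 : Finset.Icc K K = {K} := by simp
          have h2 : Finset.Icc (K + 1) K = ∅ := by apply Finset.Icc_eq_empty; omega
          simp [Phat, h1, h2]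
        · -- K ≤ T
          have hKT : K ≤ T := by omega
          have e1 : Phat ε K (T + 1)
              = Phat ε K T + ((T + 1 - 1).choose (K - 1) : ℝ) * ε ^ (T + 1 - K) * (1 - ε) ^ K := by
            unfold Phat
            rw [Finset.sum_Icc_succ_top (by omega : K ≤ T + 1)]
          have e2 : Phat ε (K + 1) (T + 1)
              = Phat ε (K + 1) T + ((T + 1 - 1).choose (K + 1 - 1) : ℝ) * ε ^ (T + 1 - (K + 1)) * (1 - ε) ^ (K + 1) := by
            unfold Phat
            rw [Finset.sum_Icc_succ_top (by omega : K + 1 ≤ T + 1)]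
          have hTs : T + 1 - 1 = T := by omega
          have hK1 : K + 1 - 1 = K := by omega
          have hTK : T + 1 - K = (T - K) + 1 := by omega
          have hTK1 : T + 1 - (K + 1) = T - K := by omega
          have hc : ((T + 1).choose K : ℝ) = (T.choose (K - 1) : ℝ) + (T.choose K : ℝ) := by
            have : (T + 1).choose K = T.choose (K - 1) + T.choose K := by
              conv_lhs => rw [show K = (K - 1) + 1 by omega]
              rw [Nat.choose_succ_succ]
              congr 1
              congr 1
              omega
            exact_mod_cast this
          rw [e1, e2, hTs, hK1, hTK, hTK1, hc]
          have := ih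
          ring_nf
          ring_nf at this
          linarith [this]

/-- binomial pmf -/
noncomputable def fpm (ε : ℝ) (T i : ℕ) : ℝ := (T.choose i : ℝ) * (1 - ε) ^ i * ε ^ (T - i)

lemma phat_tail_aux (ε : ℝ) (T : ℕ) :
    ∀ d j, 1 ≤ j → T + 1 ≤ j + d → Phat ε j T = ∑ i ∈ Finset.Icc j T, fpm ε T i := by
  intro d
  induction d with
  | zero =>
      intro j hj hd
      have h1 : Finset.Icc j T = ∅ := by apply Finset.Icc_eq_empty; omega
      simp [Phat, h1]
  | succ d ih =>
      intro j hj hd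
      rcases lt_or_ge T j with h | h
      · have h1 : Finset.Icc j T = ∅ := by apply Finset.Icc_eq_empty; omega
        simp [Phat, h1]
      · have key := phat_diff ε j hj T
        have ih' := ih (j + 1) (by omega) (by omega)
        have : Phat ε j T = fpm ε T j + Phat ε (j + 1) T := by
          unfold fpm; linarith [key]
        rw [this, ih']
        rw [Finset.Icc_eq_cons_Ioc h, Finset.sum_cons, ← Finset.Icc_add_one_left_eq_Ioc]

lemma phat_tail (ε : ℝ) (T j : ℕ) (hj : 1 ≤ j) :
    Phat ε j T = ∑ i ∈ Finset.Icc j T, fpm ε T i :=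
  phat_tail_aux ε T (T + 1) j hj (by omega)

lemma fpm_nonneg {ε : ℝ} (hε0 : 0 < ε) (hε1 : ε < 1) (T i : ℕ) : 0 ≤ fpm ε T i := by
  have h1 : (0:ℝ) ≤ 1 - ε := by linarith
  unfold fpm; positivity

lemma phat_nonneg {ε : ℝ} (hε0 : 0 < ε) (hε1 : ε < 1) (K T : ℕ) : 0 ≤ Phat ε K T := by
  unfold Phat
  apply Finset.sum_nonneg
  intro i _
  have h1 : (0:ℝ) ≤ 1 - ε := by linarith
  positivity

lemma phat_pos {ε : ℝ} (hε0 : 0 < ε) (hε1 : ε < 1) {K T : ℕ} (hK : 1 ≤ K) (hKT : K ≤ T) :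
    0 < Phat ε K T := by
  rw [phat_tail ε T K hK]
  have hmem : K ∈ Finset.Icc K T := by simp [hKT]
  have hpos : 0 < fpm ε T K := by
    unfold fpm
    have h1 : (0:ℝ) < (T.choose K : ℝ) := by exact_mod_cast Nat.choose_pos hKT
    have h2 : (0:ℝ) < 1 - ε := by linarith
    positivity
  calc (0:ℝ) < fpm ε T K := hpos
    _ ≤ ∑ i ∈ Finset.Icc K T, fpm ε T i :=
        Finset.single_le_sum (fun i _ => fpm_nonneg hε0 hε1 T i) hmem

/-- log-concavity of binomial coefficients across a gap -/
lemma choose_cross (T K i : ℕ) (h : K ≤ i) :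
    T.choose (i + 1) * T.choose K ≤ T.choose i * T.choose (K + 1) := by
  have h1 : T.choose (i + 1) * (i + 1) = T.choose i * (T - i) := Nat.choose_succ_right_eq T i
  have h2 : T.choose (K + 1) * (K + 1) = T.choose K * (T - K) := Nat.choose_succ_right_eq T K
  have key : T.choose (i + 1) * T.choose K * ((i + 1) * (K + 1))
      ≤ T.choose i * T.choose (K + 1) * ((i + 1) * (K + 1)) := by
    calc T.choose (i + 1) * T.choose K * ((i + 1) * (K + 1))
        = (T.choose (i + 1) * (i + 1)) * (T.choose K * (K + 1)) := by ring
      _ = (T.choose i * (T - i)) * (T.choose K * (K + 1)) := by rw [h1]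
      _ = T.choose i * T.choose K * ((T - i) * (K + 1)) := by ring
      _ ≤ T.choose i * T.choose K * ((T - K) * (i + 1)) := by
          apply Nat.mul_le_mul_left
          apply Nat.mul_le_mul
          · exact Nat.sub_le_sub_left h T
          · omega
      _ = (T.choose K * (T - K)) * (T.choose i * (i + 1)) := by ring
      _ = (T.choose (K + 1) * (K + 1)) * (T.choose i * (i + 1)) := by rw [h2]
      _ = T.choose i * T.choose (K + 1) * ((i + 1) * (K + 1)) := by ring
  exact Nat.le_of_mul_le_mul_right key (by positivity)

/-- cross-gap log-concavity of the binomial pmf -/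
lemma fpm_cross {ε : ℝ} (hε0 : 0 < ε) (hε1 : ε < 1) (T K i : ℕ) (h : K ≤ i) :
    fpm ε T (i + 1) * fpm ε T K ≤ fpm ε T i * fpm ε T (K + 1) := by
  have hp : (0:ℝ) ≤ 1 - ε := by linarith
  rcases lt_or_ge i T with hi | hi
  · -- i < T, so i + 1 ≤ T and exponents line up
    have he : T - (i + 1) + (T - K) = T - i + (T - (K + 1)) := by omega
    have l1 : fpm ε T (i + 1) * fpm ε T K
        = ((T.choose (i + 1) * T.choose K : ℕ) : ℝ)
          * ((1 - ε) ^ (i + 1 + K) * ε ^ (T - (i + 1) + (T - K))) := by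
      unfold fpm; push_cast; rw [pow_add, pow_add]; ring
    have l2 : fpm ε T i * fpm ε T (K + 1)
        = ((T.choose i * T.choose (K + 1) : ℕ) : ℝ)
          * ((1 - ε) ^ (i + 1 + K) * ε ^ (T - (i + 1) + (T - K))) := by
      unfold fpm; rw [he]; push_cast; rw [pow_add, pow_add]; ring
    rw [l1, l2]
    apply mul_le_mul_of_nonneg_right
    · exact_mod_cast choose_cross T K i h
    · positivity
  · -- T ≤ i : LHS is 0
    have hz : T.choose (i + 1) = 0 := Nat.choose_eq_zero_of_lt (by omega)
    have : fpm ε T (i + 1) = 0 := by unfold fpm; rw [hz]; push_cast; ring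
    rw [this, zero_mul]
    exact mul_nonneg (fpm_nonneg hε0 hε1 T i) (fpm_nonneg hε0 hε1 T (K + 1))

/-- telescoping sum over Icc -/
lemma sum_Icc_telescope (g : ℕ → ℝ) : ∀ b a, a ≤ b + 1 →
    ∑ i ∈ Finset.Icc a b, (g i - g (i + 1)) = g a - g (b + 1) := by
  intro b
  induction b with
  | zero =>
      intro a ha
      interval_cases a
      · simp
      · simp
  | succ b ih =>
      intro a ha
      rcases eq_or_lt_of_le ha with h | h
      · have h1 : Finset.Icc a (b + 1) = ∅ := by apply Finset.Icc_eq_empty; omega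
        rw [h1, ← h]; simp
      · rw [Finset.sum_Icc_succ_top (by omega : a ≤ b + 1), ih a (by omega)]
        ring

lemma phat_diff' (ε : ℝ) (K T : ℕ) (hK : 1 ≤ K) :
    Phat ε K T - Phat ε (K + 1) T = fpm ε T K := phat_diff ε K hK T

/-- log-concavity of the tail K ↦ Phat in K -/
lemma phat_logconc {ε : ℝ} (hε0 : 0 < ε) (hε1 : ε < 1) (T K : ℕ) (hK : 1 ≤ K) :
    Phat ε K T * Phat ε (K + 2) T ≤ Phat ε (K + 1) T ^ 2 := by
  have d1 : Phat ε K T = Phat ε (K + 1) T + fpm ε T K := by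
    have := phat_diff' ε K T hK; linarith
  have d2 : Phat ε (K + 2) T = Phat ε (K + 1) T - fpm ε T (K + 1) := by
    have := phat_diff' ε (K + 1) T (by omega); linarith
  rw [d1, d2]
  rcases le_or_gt (fpm ε T K) (fpm ε T (K + 1)) with hc | hc
  · nlinarith [phat_nonneg hε0 hε1 (K + 1) T, fpm_nonneg hε0 hε1 T K,
      fpm_nonneg hε0 hε1 T (K + 1)]
  · -- geometric bound : Phat (K+1) * (fpm K - fpm (K+1)) ≤ fpm K * fpm (K+1)
    have key : Phat ε (K + 1) T * (fpm ε T K - fpm ε T (K + 1))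
        ≤ fpm ε T K * fpm ε T (K + 1) := by
      rw [phat_tail ε T (K + 1) (by omega), Finset.sum_mul]
      have step : ∀ i ∈ Finset.Icc (K + 1) T,
          fpm ε T i * (fpm ε T K - fpm ε T (K + 1))
            ≤ fpm ε T K * (fpm ε T i - fpm ε T (i + 1)) := by
        intro i hi
        simp only [Finset.mem_Icc] at hi
        have hcross := fpm_cross hε0 hε1 T K i (by omega)
        nlinarith [hcross]
      calc ∑ i ∈ Finset.Icc (K + 1) T, fpm ε T i * (fpm ε T K - fpm ε T (K + 1))
          ≤ ∑ i ∈ Finset.Icc (K + 1) T, fpm ε T K * (fpm ε T i - fpm ε T (i + 1)) :=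
            Finset.sum_le_sum step
        _ = fpm ε T K * (fpm ε T (K + 1) - fpm ε T (T + 1)) := by
            rw [← Finset.mul_sum]
            rcases le_or_gt (K + 1) (T + 1) with h | h
            · rw [sum_Icc_telescope (fpm ε T) T (K + 1) h]
            · have h1 : Finset.Icc (K + 1) T = ∅ := by apply Finset.Icc_eq_empty; omega
              have z1 : fpm ε T (K + 1) = 0 := by
                unfold fpm
                rw [Nat.choose_eq_zero_of_lt (by omega)]; push_cast; ring
              have z2 : fpm ε T (T + 1) = 0 := by
                unfold fpm
                rw [Nat.choose_eq_zero_of_lt (by omega)]; push_cast; ring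
              simp [h1, z1, z2]
        _ ≤ fpm ε T K * fpm ε T (K + 1) := by
            have z : fpm ε T (T + 1) = 0 := by
              unfold fpm
              rw [Nat.choose_eq_zero_of_lt (by omega)]; push_cast; ring
            rw [z]; ring_nf; exact le_refl _
    nlinarith [key, fpm_nonneg hε0 hε1 T K, fpm_nonneg hε0 hε1 T (K + 1),
      phat_nonneg hε0 hε1 (K + 1) T]

/-- once the reward decreases, it keeps decreasing -/
lemma reward_persist {ε : ℝ} (hε0 : 0 < ε) (hε1 : ε < 1) (N : ℕ) (hN : 1 ≤ N)
    (T K : ℕ) (hK : 1 ≤ K) (hKT : K + 2 ≤ T)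
    (h : Rew ε N T (K + 1) ≤ Rew ε N T K) :
    Rew ε N T (K + 2) ≤ Rew ε N T (K + 1) := by
  have ha : 0 < Phat ε K T := phat_pos hε0 hε1 hK (by omega)
  have hb : 0 < Phat ε (K + 1) T := phat_pos hε0 hε1 (by omega) (by omega)
  have hc : 0 < Phat ε (K + 2) T := phat_pos hε0 hε1 (by omega) hKT
  set a := Phat ε K T
  set b := Phat ε (K + 1) T
  set c := Phat ε (K + 2) T
  have hlc : a * c ≤ b ^ 2 := phat_logconc hε0 hε1 T K hK
  have hpow : a ^ N * c ^ N ≤ (b ^ N) ^ 2 := by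
    have h1 : (a * c) ^ N ≤ (b ^ 2) ^ N :=
      pow_le_pow_left₀ (by positivity) hlc N
    calc a ^ N * c ^ N = (a * c) ^ N := (mul_pow a c N).symm
      _ ≤ (b ^ 2) ^ N := h1
      _ = (b ^ N) ^ 2 := by rw [← pow_mul, ← pow_mul, Nat.mul_comm]
  have hx : 0 < a ^ N := by positivity
  have hy : 0 < b ^ N := by positivity
  have hz : 0 < c ^ N := by positivity
  simp only [Rew, Pall] at h ⊢
  push_cast at h ⊢
  set x := a ^ N
  set y := b ^ N
  set z := c ^ N
  -- h : (K+1) * y ≤ K * x ;  goal : (K+2) * z ≤ (K+1) * y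
  -- hpow : x * z ≤ y^2
  by_contra hcon
  push_neg at hcon
  have h1 : ((K:ℝ) + 1) * y * (((K:ℝ) + 2) * z) ≤ (K:ℝ) * x * (((K:ℝ) + 2) * z) :=
    mul_le_mul_of_nonneg_right h (by positivity)
  have h2 : (K:ℝ) * ((K:ℝ) + 2) * (x * z) ≤ (K:ℝ) * ((K:ℝ) + 2) * y ^ 2 := by
    apply mul_le_mul_of_nonneg_left hpow
    positivity
  have h3 : (K:ℝ) * ((K:ℝ) + 2) * y ^ 2 ≤ ((K:ℝ) + 1) ^ 2 * y ^ 2 := by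
    nlinarith [sq_nonneg y, hy]
  have h4 : (((K:ℝ) + 1) * y) * (((K:ℝ) + 1) * y) < (((K:ℝ) + 1) * y) * (((K:ℝ) + 2) * z) := by
    apply mul_lt_mul_of_pos_left hcon
    positivity
  nlinarith [h1, h2, h3, h4]

lemma chain_mono (R : ℕ → ℝ) (a b : ℕ)
    (h : ∀ k, a ≤ k → k + 1 ≤ b → R k ≤ R (k + 1)) :
    ∀ K K', a ≤ K → K ≤ K' → K' ≤ b → R K ≤ R K' := by
  intro K K' hK hKK' hK'b
  induction K', hKK' using Nat.le_induction with
  | base => exact le_refl _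
  | succ n hn ih =>
      calc R K ≤ R n := ih (by omega)
        _ ≤ R (n + 1) := h n (le_trans hK hn) hK'b


/-- For `0 < ε < 1`, `N ≥ 1` and `T ≥ 1`, the map `K ↦ R_T(K)` is
unimodal on `{1,…,T}`: there is `m ∈ {1,…,T}` such that `R_T` is monotonically
nondecreasing up to `m` and monotonically nonincreasing from `m` on. -/
theorem reward_unimodal (ε : ℝ) (hε0 : 0 < ε) (hε1 : ε < 1) (N : ℕ) (hN : 1 ≤ N)
    (T : ℕ) (hT : 1 ≤ T) :
    ∃ m, 1 ≤ m ∧ m ≤ T ∧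
      (∀ K K', 1 ≤ K → K < K' → K' ≤ m → Rew ε N T K ≤ Rew ε N T K') ∧
      (∀ K K', m ≤ K → K < K' → K' ≤ T → Rew ε N T K' ≤ Rew ε N T K) := by
  classical
  set P : ℕ → Prop := fun k => 1 ≤ k ∧ k < T ∧ Rew ε N T (k + 1) ≤ Rew ε N T k with hP
  by_cases hex : ∃ k, P k
  · -- take the first descent point
    let m := Nat.find hex
    have hm : P m := Nat.find_spec hex
    obtain ⟨hm1, hmT, hmdec⟩ := hm
    refine ⟨m, hm1, le_of_lt hmT, ?_, ?_⟩
    · -- increasing up to m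
      have step : ∀ k, 1 ≤ k → k + 1 ≤ m → Rew ε N T k ≤ Rew ε N T (k + 1) := by
        intro k hk hkm
        have hnot : ¬ (1 ≤ k ∧ k < T ∧ Rew ε N T (k + 1) ≤ Rew ε N T k) :=
          Nat.find_min hex (by omega)
        push_neg at hnot
        exact le_of_lt (hnot hk (by omega))
      intro K K' hK hKK' hK'm
      exact chain_mono (Rew ε N T) 1 m step K K' hK (le_of_lt hKK') hK'm
    · -- decreasing from m
      have step : ∀ k, m ≤ k → k + 1 ≤ T → Rew ε N T (k + 1) ≤ Rew ε N T k := by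
        intro k hmk
        induction k, hmk using Nat.le_induction with
        | base => intro _; exact hmdec
        | succ n hn ih =>
            intro hnT
            exact reward_persist hε0 hε1 N hN T n (by omega) (by omega) (ih (by omega))
      intro K K' hK hKK' hK'T
      have : ∀ k, m ≤ k → k + 1 ≤ T → (fun j => -Rew ε N T j) k ≤ (fun j => -Rew ε N T j) (k + 1) := by
        intro k h1 h2
        simp only [neg_le_neg_iff]
        exact step k h1 h2
      have := chain_mono (fun j => -Rew ε N T j) m T this K K' hK (le_of_lt hKK') hK'T
      simpa using this
  · -- no descent : m = T, function nondecreasing everywhere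
    refine ⟨T, hT, le_refl T, ?_, ?_⟩
    · have step : ∀ k, 1 ≤ k → k + 1 ≤ T → Rew ε N T k ≤ Rew ε N T (k + 1) := by
        intro k hk hkT
        by_contra hcon
        push_neg at hcon
        exact hex ⟨k, hk, by omega, le_of_lt hcon⟩
      intro K K' hK hKK' hK'T
      exact chain_mono (Rew ε N T) 1 T step K K' hK (le_of_lt hKK') hK'T
    · intro K K' hK hKK' hK'T
      omega
end

section
/- For every erasure probability ε with 0 < ε < 1, every integer N ≥ 1, and every integer t ≥ 1, the optimal block size is at most the greedy block size: K*_t ≤ K̂_t. -/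
/-- `Kh` is the greedy block size for horizon `T`: the least maximizer of the
expected immediate reward `K ↦ R_T(K)` over `K ∈ {1,…,T}`. -/
def IsGreedy (ε : ℝ) (N T Kh : ℕ) : Prop :=
  Kh ∈ Finset.Icc 1 T ∧ (∀ K ∈ Finset.Icc 1 T, Rew ε N T K ≤ Rew ε N T Kh) ∧
  (∀ K ∈ Finset.Icc 1 T, (∀ K' ∈ Finset.Icc 1 T, Rew ε N T K' ≤ Rew ε N T K) → Kh ≤ K)

/-- Right-hand side of the Bellman recursion for the block-size-adaptation MDP:
`R_t(K) + ∑_{j=0}^{t-K} (P(K, t-j) - P(K, t-j-1)) · V(j)`. -/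
noncomputable def bellmanRHS (ε : ℝ) (N : ℕ) (V : ℕ → ℝ) (t K : ℕ) : ℝ :=
  Rew ε N t K +
    ∑ j ∈ Finset.range (t - K + 1), (Pall ε N K (t - j) - Pall ε N K (t - j - 1)) * V j

/-- `V` is the optimal value function of the finite-horizon MDP (Bellman recursion with
`V 0 = 0`, and `V t` the maximum of `bellmanRHS` over `K ∈ {1,…,t}`), and `Ks t` is the
least block size in `{1,…,t}` attaining that maximum. -/
def BellmanSystem (ε : ℝ) (N : ℕ) (V : ℕ → ℝ) (Ks : ℕ → ℕ) : Prop :=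
  V 0 = 0 ∧
  (∀ t, 1 ≤ t → ∀ K ∈ Finset.Icc 1 t, bellmanRHS ε N V t K ≤ V t) ∧
  (∀ t, 1 ≤ t → Ks t ∈ Finset.Icc 1 t ∧ V t = bellmanRHS ε N V t (Ks t) ∧
    ∀ K ∈ Finset.Icc 1 t, V t = bellmanRHS ε N V t K → Ks t ≤ K)

noncomputable def Bsum (ε : ℝ) (K T : ℕ) : ℝ :=
  ∑ i ∈ Finset.Icc K T, (T.choose i : ℝ) * (1 - ε) ^ i * ε ^ (T - i)

lemma Phat_nonneg {ε : ℝ} (h0 : 0 ≤ ε) (h1 : ε ≤ 1) (K T : ℕ) : 0 ≤ Phat ε K T := by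
  have hp : (0:ℝ) ≤ 1 - ε := by linarith
  exact Finset.sum_nonneg fun τ _ => by positivity

lemma Phat_mono_T {ε : ℝ} (h0 : 0 ≤ ε) (h1 : ε ≤ 1) (K : ℕ) : Monotone (Phat ε K) := by
  apply monotone_nat_of_le_succ
  intro T
  have hp : (0:ℝ) ≤ 1 - ε := by linarith
  exact Finset.sum_le_sum_of_subset_of_nonneg
    (Finset.Icc_subset_Icc_right (Nat.le_succ T)) (fun τ _ _ => by positivity)

lemma Bsum_succ {ε : ℝ} (k T : ℕ) (hk : k ≤ T) :
    Bsum ε (k+1) (T+1) = Bsum ε (k+1) T + (T.choose k : ℝ) * (1-ε)^(k+1) * ε^(T-k) := by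
  have himg : Finset.Icc (k+1) (T+1) = (Finset.Icc k T).image (· + 1) := by
    rw [Finset.image_add_right_Icc]
  have hinj : ∀ x ∈ Finset.Icc k T, ∀ y ∈ Finset.Icc k T, x + 1 = y + 1 → x = y := by
    intro x _ y _ h; omega
  have step1 : Bsum ε (k+1) (T+1)
      = ∑ i ∈ Finset.Icc k T, ((T+1).choose (i+1) : ℝ) * (1-ε)^(i+1) * ε^(T-i) := by
    rw [Bsum, himg, Finset.sum_image hinj]
    refine Finset.sum_congr rfl fun i hi => ?_
    have : T + 1 - (i + 1) = T - i := by omega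
    rw [this]
  have split : ∀ i ∈ Finset.Icc k T,
      ((T+1).choose (i+1) : ℝ) * (1-ε)^(i+1) * ε^(T-i)
        = (1-ε) * ((T.choose i : ℝ) * (1-ε)^i * ε^(T-i))
          + (T.choose (i+1) : ℝ) * (1-ε)^(i+1) * ε^(T+1-(i+1)) := by
    intro i hi
    have hc : ((T+1).choose (i+1) : ℝ) = (T.choose i : ℝ) + (T.choose (i+1) : ℝ) := by
      rw [Nat.choose_succ_succ]; push_cast; ring
    have h2 : T + 1 - (i + 1) = T - i := by omega
    rw [hc, h2]; ring
  have step2 : Bsum ε (k+1) (T+1)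
      = (1-ε) * Bsum ε k T
        + ∑ i ∈ Finset.Icc k T, (T.choose (i+1) : ℝ) * (1-ε)^(i+1) * ε^(T+1-(i+1)) := by
    rw [step1, Finset.sum_congr rfl split, Finset.sum_add_distrib, Bsum, Finset.mul_sum]
  -- second sum equals ε * Bsum ε (k+1) T
  have s2 : ∑ i ∈ Finset.Icc k T, (T.choose (i+1) : ℝ) * (1-ε)^(i+1) * ε^(T+1-(i+1))
      = ε * Bsum ε (k+1) T := by
    have : ∑ i ∈ Finset.Icc k T, (T.choose (i+1) : ℝ) * (1-ε)^(i+1) * ε^(T+1-(i+1))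
        = ∑ j ∈ Finset.Icc (k+1) (T+1), (T.choose j : ℝ) * (1-ε)^j * ε^(T+1-j) := by
      rw [himg, Finset.sum_image hinj]
    rw [this, Finset.sum_Icc_succ_top (by omega : k + 1 ≤ T + 1)]
    have hz : (T.choose (T+1) : ℝ) = 0 := by
      rw [Nat.choose_eq_zero_of_lt (by omega)]; norm_num
    rw [hz, Bsum, Finset.mul_sum]
    have : ∀ j ∈ Finset.Icc (k+1) T, (T.choose j : ℝ) * (1-ε)^j * ε^(T+1-j)
        = ε * ((T.choose j : ℝ) * (1-ε)^j * ε^(T-j)) := by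
      intro j hj
      have : T + 1 - j = (T - j) + 1 := by
        have := (Finset.mem_Icc.mp hj).2; omega
      rw [this, pow_succ]; ring
    rw [Finset.sum_congr rfl this]; ring
  -- Bsum ε k T = head + Bsum ε (k+1) T
  have hbot : Bsum ε k T = (T.choose k : ℝ) * (1-ε)^k * ε^(T-k) + Bsum ε (k+1) T := by
    rw [Bsum, Finset.Icc_eq_cons_Ioc hk, Finset.sum_cons, ← Finset.Icc_add_one_left_eq_Ioc, Bsum]
  rw [step2, s2, hbot]
  ring

lemma Phat_succT {ε : ℝ} (k T : ℕ) (hk : k ≤ T) :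
    Phat ε (k+1) (T+1) = Phat ε (k+1) T + (T.choose k : ℝ) * ε^(T-k) * (1-ε)^(k+1) := by
  rw [Phat, Finset.sum_Icc_succ_top (by omega : k + 1 ≤ T + 1), Phat]
  congr 1
  simp

lemma Phat_eq_Bsum {ε : ℝ} (k : ℕ) : ∀ T, Phat ε (k+1) T = Bsum ε (k+1) T := by
  intro T
  induction T with
  | zero =>
    rw [Phat, Bsum, Finset.Icc_eq_empty (by omega), Finset.sum_empty, Finset.sum_empty]
  | succ T ih =>
    rcases le_or_gt k T with hk | hk
    · rw [Phat_succT k T hk, Bsum_succ k T hk, ih]; ring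
    · rw [Phat, Bsum, Finset.Icc_eq_empty (by omega), Finset.sum_empty, Finset.sum_empty]

lemma Bsum_nonneg {ε : ℝ} (h0 : 0 ≤ ε) (h1 : ε ≤ 1) (K T : ℕ) : ∀ i ∈ Finset.Icc K T,
    (0:ℝ) ≤ (T.choose i : ℝ) * (1 - ε) ^ i * ε ^ (T - i) := by
  have hp : (0:ℝ) ≤ 1 - ε := by linarith
  intro i _; positivity

lemma Phat_anti_K {ε : ℝ} (h0 : 0 ≤ ε) (h1 : ε ≤ 1) {a b T : ℕ} (ha : 1 ≤ a) (hab : a ≤ b) :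
    Phat ε b T ≤ Phat ε a T := by
  obtain ⟨a', rfl⟩ : ∃ a', a = a' + 1 := ⟨a - 1, by omega⟩
  obtain ⟨b', rfl⟩ : ∃ b', b = b' + 1 := ⟨b - 1, by omega⟩
  rw [Phat_eq_Bsum, Phat_eq_Bsum, Bsum, Bsum]
  exact Finset.sum_le_sum_of_subset_of_nonneg
    (Finset.Icc_subset_Icc_left (by omega)) (fun i hi _ => Bsum_nonneg h0 h1 _ T i hi)

lemma Bsum_zero {ε : ℝ} (T : ℕ) : Bsum ε 0 T = 1 := by
  have h := add_pow (1 - ε) ε T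
  have hIcc : Finset.Icc 0 T = Finset.range (T+1) := by
    ext x; simp [Nat.lt_succ_iff]
  rw [Bsum, hIcc]
  have : ∀ i ∈ Finset.range (T+1),
      (T.choose i : ℝ) * (1 - ε) ^ i * ε ^ (T - i)
        = (1-ε) ^ i * ε ^ (T - i) * (T.choose i : ℝ) := by intro i _; ring
  rw [Finset.sum_congr rfl this, ← h]
  norm_num

lemma Phat_le_one {ε : ℝ} (h0 : 0 ≤ ε) (h1 : ε ≤ 1) {K : ℕ} (hK : 1 ≤ K) (T : ℕ) :
    Phat ε K T ≤ 1 := by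
  obtain ⟨k, rfl⟩ : ∃ k, K = k + 1 := ⟨K - 1, by omega⟩
  rw [Phat_eq_Bsum, ← Bsum_zero (ε := ε) T, Bsum, Bsum]
  exact Finset.sum_le_sum_of_subset_of_nonneg
    (Finset.Icc_subset_Icc_left (by omega)) (fun i hi _ => Bsum_nonneg h0 h1 _ T i hi)

lemma Phat_Kpred {ε : ℝ} {K : ℕ} (hK : 1 ≤ K) : Phat ε K (K - 1) = 0 := by
  rw [Phat, Finset.Icc_eq_empty (by omega), Finset.sum_empty]




variable {ε : ℝ}

lemma Pall_nonneg (h0 : 0 ≤ ε) (h1 : ε ≤ 1) (N K T : ℕ) : 0 ≤ Pall ε N K T :=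
  pow_nonneg (Phat_nonneg h0 h1 K T) N

lemma Pall_mono_T (h0 : 0 ≤ ε) (h1 : ε ≤ 1) (N K : ℕ) {T T' : ℕ} (h : T ≤ T') : Pall ε N K T ≤ Pall ε N K T' :=
  pow_le_pow_left₀ (Phat_nonneg h0 h1 K T) (Phat_mono_T h0 h1 K h) N

lemma Pall_anti_K (h0 : 0 ≤ ε) (h1 : ε ≤ 1) (N : ℕ) {a b : ℕ} (T : ℕ) (ha : 1 ≤ a) (hab : a ≤ b) :
    Pall ε N b T ≤ Pall ε N a T :=
  pow_le_pow_left₀ (Phat_nonneg h0 h1 b T) (Phat_anti_K h0 h1 ha hab) N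

lemma Pall_Kpred {N K : ℕ} (hN : 1 ≤ N) (hK : 1 ≤ K) : Pall ε N K (K - 1) = 0 := by
  rw [Pall, Phat_Kpred hK, zero_pow (by omega)]

lemma Rew_nonneg (h0 : 0 ≤ ε) (h1 : ε ≤ 1) (N T K : ℕ) : 0 ≤ Rew ε N T K :=
  mul_nonneg (Nat.cast_nonneg K) (Pall_nonneg h0 h1 N K T)

lemma abel_sum (a W : ℕ → ℝ) : ∀ M : ℕ,
    ∑ j ∈ Finset.range (M+1), (a j - a (j+1)) * W j
      = a 0 * W 0 - a (M+1) * W M + ∑ j ∈ Finset.range M, a (j+1) * (W (j+1) - W j) := by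
  intro M
  induction M with
  | zero => simp; ring
  | succ M ih =>
    rw [Finset.sum_range_succ, ih, Finset.sum_range_succ]
    ring

lemma bellmanRHS_eq {ε : ℝ} (h0 : 0 ≤ ε) (h1 : ε ≤ 1) {N : ℕ} (hN : 1 ≤ N)
    (V : ℕ → ℝ) (hV0 : V 0 = 0) {t K : ℕ} (hK1 : 1 ≤ K) (hKt : K ≤ t) :
    bellmanRHS ε N V t K
      = Rew ε N t K + ∑ j ∈ Finset.range (t - K), Pall ε N K (t - j - 1) * (V (j+1) - V j) := by
  rw [bellmanRHS]
  congr 1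
  have h1' : ∑ j ∈ Finset.range (t - K + 1), (Pall ε N K (t - j) - Pall ε N K (t - j - 1)) * V j
      = ∑ j ∈ Finset.range (t - K + 1),
          ((fun j => Pall ε N K (t - j)) j - (fun j => Pall ε N K (t - j)) (j+1)) * V j := by
    refine Finset.sum_congr rfl fun j _ => ?_
    have : t - j - 1 = t - (j + 1) := by omega
    simp only [this]
  rw [h1', abel_sum]
  have e1 : t - (t - K + 1) = K - 1 := by omega
  rw [hV0, e1, Pall_Kpred hN hK1]
  simp only [mul_zero, zero_mul, sub_zero, zero_add]
  refine Finset.sum_congr rfl fun j _ => ?_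
  have e2 : t - (j + 1) = t - j - 1 := by omega
  rw [e2]

lemma bellman_succ_le {ε : ℝ} (h0 : 0 ≤ ε) (h1 : ε ≤ 1) {N : ℕ} (hN : 1 ≤ N)
    (V : ℕ → ℝ) (hV0 : V 0 = 0) {t K : ℕ} (hK1 : 1 ≤ K) (hKt : K ≤ t)
    (hmono : ∀ j, j + 1 ≤ t → V j ≤ V (j+1)) :
    bellmanRHS ε N V t K ≤ bellmanRHS ε N V (t+1) K := by
  rw [bellmanRHS_eq h0 h1 hN V hV0 hK1 hKt, bellmanRHS_eq h0 h1 hN V hV0 hK1 (by omega)]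
  have hΔ : ∀ j, j + 1 ≤ t → 0 ≤ V (j+1) - V j := fun j hj => by
    have := hmono j hj; linarith
  apply add_le_add
  · exact mul_le_mul_of_nonneg_left (Pall_mono_T h0 h1 N K (Nat.le_succ t)) (Nat.cast_nonneg K)
  · calc ∑ j ∈ Finset.range (t - K), Pall ε N K (t - j - 1) * (V (j+1) - V j)
        ≤ ∑ j ∈ Finset.range (t - K), Pall ε N K (t + 1 - j - 1) * (V (j+1) - V j) := by
          refine Finset.sum_le_sum fun j hj => ?_
          have hjle : j + 1 ≤ t := by
            have := Finset.mem_range.mp hj; omega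
          exact mul_le_mul_of_nonneg_right
            (Pall_mono_T h0 h1 N K (by omega)) (hΔ j hjle)
      _ ≤ ∑ j ∈ Finset.range (t + 1 - K), Pall ε N K (t + 1 - j - 1) * (V (j+1) - V j) := by
          refine Finset.sum_le_sum_of_subset_of_nonneg
            (Finset.range_subset_range.mpr (by omega)) (fun j hj _ => ?_)
          have hjle : j + 1 ≤ t := by
            have := Finset.mem_range.mp hj; omega
          exact mul_nonneg (Pall_nonneg h0 h1 N K _) (hΔ j hjle)

lemma bellman_anti_K {ε : ℝ} (h0 : 0 ≤ ε) (h1 : ε ≤ 1) {N : ℕ} (hN : 1 ≤ N)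
    (V : ℕ → ℝ) (hV0 : V 0 = 0) {t K Kh : ℕ} (hKh1 : 1 ≤ Kh) (hhK : Kh ≤ K) (hKt : K ≤ t)
    (hmono : ∀ j, j + 1 ≤ t → V j ≤ V (j+1))
    (hR : Rew ε N t K ≤ Rew ε N t Kh) :
    bellmanRHS ε N V t K ≤ bellmanRHS ε N V t Kh := by
  rw [bellmanRHS_eq h0 h1 hN V hV0 (by omega) hKt,
    bellmanRHS_eq h0 h1 hN V hV0 hKh1 (by omega)]
  have hΔ : ∀ j, j + 1 ≤ t → 0 ≤ V (j+1) - V j := fun j hj => by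
    have := hmono j hj; linarith
  apply add_le_add hR
  calc ∑ j ∈ Finset.range (t - K), Pall ε N K (t - j - 1) * (V (j+1) - V j)
      ≤ ∑ j ∈ Finset.range (t - K), Pall ε N Kh (t - j - 1) * (V (j+1) - V j) := by
        refine Finset.sum_le_sum fun j hj => ?_
        have hjle : j + 1 ≤ t := by
          have := Finset.mem_range.mp hj; omega
        exact mul_le_mul_of_nonneg_right
          (Pall_anti_K h0 h1 N _ hKh1 hhK) (hΔ j hjle)
    _ ≤ ∑ j ∈ Finset.range (t - Kh), Pall ε N Kh (t - j - 1) * (V (j+1) - V j) := by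
        refine Finset.sum_le_sum_of_subset_of_nonneg
          (Finset.range_subset_range.mpr (by omega)) (fun j hj _ => ?_)
        have hjle : j + 1 ≤ t := by
          have := Finset.mem_range.mp hj; omega
        exact mul_nonneg (Pall_nonneg h0 h1 N Kh _) (hΔ j hjle)



lemma V_mono {ε : ℝ} (h0 : 0 ≤ ε) (h1 : ε ≤ 1) {N : ℕ} (hN : 1 ≤ N)
    {V : ℕ → ℝ} {Ks : ℕ → ℕ} (hB : BellmanSystem ε N V Ks) :
    ∀ t, V t ≤ V (t + 1) := by
  obtain ⟨hV0, hub, hopt⟩ := hB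
  intro t
  induction t using Nat.strong_induction_on with
  | _ t ih =>
    rcases Nat.eq_zero_or_pos t with rfl | ht
    · obtain ⟨hKs1, hVeq, -⟩ := hopt 1 le_rfl
      have hKs1' : Ks 1 = 1 := by
        have := Finset.mem_Icc.mp hKs1; omega
      rw [hV0, hVeq, hKs1', bellmanRHS_eq h0 h1 hN V hV0 le_rfl le_rfl]
      simp only [Nat.sub_self, Finset.range_zero, Finset.sum_empty, add_zero]
      exact Rew_nonneg h0 h1 N 1 1
    · obtain ⟨hKs, hVeq, -⟩ := hopt t ht
      have hKs' := Finset.mem_Icc.mp hKs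
      calc V t = bellmanRHS ε N V t (Ks t) := hVeq
        _ ≤ bellmanRHS ε N V (t+1) (Ks t) :=
            bellman_succ_le h0 h1 hN V hV0 hKs'.1 hKs'.2 (fun j hj => ih j (by omega))
        _ ≤ V (t+1) := hub (t+1) (by omega) (Ks t) (Finset.mem_Icc.mpr ⟨hKs'.1, by omega⟩)

/-- For `0 < ε < 1`, `N ≥ 1` and `t ≥ 1`, the optimal block size is at
most the greedy block size: `K*_t ≤ K̂_t`. -/
theorem optimal_le_greedy (ε : ℝ) (hε0 : 0 < ε) (hε1 : ε < 1) (N : ℕ) (hN : 1 ≤ N)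
    (V : ℕ → ℝ) (Ks : ℕ → ℕ) (hB : BellmanSystem ε N V Ks)
    (t : ℕ) (ht : 1 ≤ t) (Kh : ℕ) (hG : IsGreedy ε N t Kh) :
    Ks t ≤ Kh := by
  have h0 : (0:ℝ) ≤ ε := le_of_lt hε0
  have h1 : ε ≤ 1 := le_of_lt hε1
  obtain ⟨hV0, hub, hopt⟩ := hB
  obtain ⟨hKsm, hVeq, hmin⟩ := hopt t ht
  obtain ⟨hKhm, hGmax, -⟩ := hG
  have hKs' := Finset.mem_Icc.mp hKsm
  have hKh' := Finset.mem_Icc.mp hKhm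
  by_contra hcon
  push_neg at hcon
  have hmono : ∀ j, j + 1 ≤ t → V j ≤ V (j+1) :=
    fun j _ => V_mono h0 h1 hN ⟨hV0, hub, hopt⟩ j
  have hle : bellmanRHS ε N V t (Ks t) ≤ bellmanRHS ε N V t Kh :=
    bellman_anti_K h0 h1 hN V hV0 hKh'.1 (le_of_lt hcon) hKs'.2 hmono
      (hGmax (Ks t) hKsm)
  have heq : V t = bellmanRHS ε N V t Kh :=
    le_antisymm (hVeq ▸ hle) (hub t ht Kh hKhm)
  exact absurd (hmin Kh hKhm heq) (not_le.mpr hcon)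
end
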